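/- arXiv:1804.01269 — 2 statements merged into one kernel-verified Lean document; each statement's English description precedes it below -/
import Mathlib

section
/- For all but countably many pairs (θ₁, θ₂) ∈ (0,π) × (0,π) and every nonnegative integer k, lim_{n→∞} (1/n^{k+1}) Σ_{t=1}^n t^k sin²(θ₁ t + θ₂ t²) = 1/(2(k+1)). -/
open Real Filter Finset


lemma pow_diff_bounds (k : ℕ) (a : ℝ) (ha : 0 ≤ a) :
    ((k:ℝ)+1) * a^k ≤ (a+1)^(k+1) - a^(k+1) ∧ (a+1)^(k+1) - a^(k+1) ≤ ((k:ℝ)+1) * (a+1)^k := by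
  have h := geom_sum₂_mul (a+1) a (k+1)
  have hd : (a+1) - a = 1 := by ring
  rw [hd, mul_one] at h
  rw [← h]
  constructor
  · calc ((k:ℝ)+1) * a^k = ∑ _i ∈ range (k+1), a^k := by
          rw [Finset.sum_const, card_range]; push_cast; ring
      _ ≤ ∑ i ∈ range (k+1), (a+1)^i * a^(k-i) := by
          apply Finset.sum_le_sum
          intro i hi
          simp only [mem_range] at hi
          have hik : i ≤ k := by omega
          calc a^k = a^i * a^(k-i) := by rw [← pow_add]; congr 1; omega
            _ ≤ (a+1)^i * a^(k-i) := by
                apply mul_le_mul_of_nonneg_right _ (pow_nonneg ha _)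
                exact pow_le_pow_left₀ ha (by linarith) i
      _ = ∑ i ∈ range (k+1), (a+1)^i * a^(k+1-1-i) := by
          simp only [Nat.add_sub_cancel]
  · calc ∑ i ∈ range (k+1), (a+1)^i * a^(k+1-1-i)
        ≤ ∑ i ∈ range (k+1), (a+1)^k := by
          apply Finset.sum_le_sum
          intro i hi
          simp only [mem_range] at hi
          have hik : i ≤ k := by omega
          calc (a+1)^i * a^(k+1-1-i) ≤ (a+1)^i * (a+1)^(k-i) := by
                apply mul_le_mul_of_nonneg_left _ (pow_nonneg (by linarith) _)
                have : k+1-1-i = k-i := by omega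
                rw [this]
                exact pow_le_pow_left₀ ha (by linarith) _
            _ = (a+1)^k := by rw [← pow_add]; congr 1; omega
      _ = ((k:ℝ)+1) * (a+1)^k := by rw [Finset.sum_const, card_range]; push_cast; ring

lemma sum_pow_sandwich (k n : ℕ) :
    (n:ℝ)^(k+1) ≤ ((k:ℝ)+1) * ∑ t ∈ Icc 1 n, (t:ℝ)^k ∧
      ((k:ℝ)+1) * ∑ t ∈ Icc 1 n, (t:ℝ)^k ≤ ((n:ℝ)+1)^(k+1) - 1 := by
  induction n with
  | zero => simp
  | succ n ih =>
    rw [Finset.sum_Icc_succ_top (by omega)]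
    obtain ⟨h1, h2⟩ := ih
    obtain ⟨g1, g2⟩ := pow_diff_bounds k (n:ℝ) (Nat.cast_nonneg n)
    obtain ⟨g1', g2'⟩ := pow_diff_bounds k ((n:ℝ)+1) (by positivity)
    push_cast
    constructor
    · push_cast at h1 g2 ⊢; nlinarith
    · push_cast at h2 g1' ⊢; nlinarith

lemma L1 (k : ℕ) :
    Tendsto (fun n : ℕ => (∑ t ∈ Icc 1 n, (t:ℝ)^k) / (n:ℝ)^(k+1)) atTop
      (nhds (1/((k:ℝ)+1))) := by
  have hk : (0:ℝ) < (k:ℝ)+1 := by positivity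
  have hub : Tendsto (fun n : ℕ => (1 + 1/(n:ℝ))^(k+1) / ((k:ℝ)+1)) atTop (nhds (1/((k:ℝ)+1))) := by
    have h1 : Tendsto (fun n : ℕ => 1 + 1/(n:ℝ)) atTop (nhds 1) := by
      have : Tendsto (fun n : ℕ => 1/(n:ℝ)) atTop (nhds 0) := tendsto_one_div_atTop_nhds_zero_nat
      simpa using (tendsto_const_nhds.add this)
    have h2 := (h1.pow (k+1)).div_const ((k:ℝ)+1)
    simpa using h2
  apply tendsto_of_tendsto_of_tendsto_of_le_of_le' tendsto_const_nhds hub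
  · filter_upwards [eventually_ge_atTop 1] with n hn
    have hn0 : (0:ℝ) < (n:ℝ) := by exact_mod_cast hn
    have := (sum_pow_sandwich k n).1
    rw [div_le_div_iff₀ hk (by positivity)]
    linarith [this]
  · filter_upwards [eventually_ge_atTop 1] with n hn
    have hn0 : (0:ℝ) < (n:ℝ) := by exact_mod_cast hn
    have h2 := (sum_pow_sandwich k n).2
    rw [div_le_div_iff₀ (by positivity) hk]
    have he : (1 + 1/(n:ℝ))^(k+1) * (n:ℝ)^(k+1) = ((n:ℝ)+1)^(k+1) := by
      rw [← mul_pow]; congr 1; field_simp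
    nlinarith [h2, pow_pos hn0 (k+1)]

lemma telescope_pow (k : ℕ) (hk : 1 ≤ k) :
    ∀ t : ℕ, (t:ℝ)^k = ∑ m ∈ Icc 1 t, ((m:ℝ)^k - ((m:ℝ)-1)^k) := by
  intro t
  induction t with
  | zero => simp [zero_pow (by omega : k ≠ 0)]
  | succ s ihs =>
    rw [Finset.sum_Icc_succ_top (by omega), ← ihs]
    push_cast; ring

lemma abel_o (k : ℕ) (a : ℕ → ℝ)
    (hA : Tendsto (fun n : ℕ => (∑ t ∈ Icc 1 n, a t) / n) atTop (nhds 0)) :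
    Tendsto (fun n : ℕ => (∑ t ∈ Icc 1 n, (t:ℝ)^k * a t) / (n:ℝ)^(k+1)) atTop (nhds 0) := by
  rcases Nat.eq_zero_or_pos k with rfl | hk
  · simpa using hA
  set A : ℕ → ℝ := fun j => ∑ t ∈ Icc 1 j, a t with hAdef
  have key : ∀ n : ℕ, ∑ t ∈ Icc 1 n, (t:ℝ)^k * a t
      = ∑ m ∈ Icc 1 n, ((m:ℝ)^k - ((m:ℝ)-1)^k) * (A n - A (m-1)) := by
    intro n
    have h1 : ∀ t ∈ Icc 1 n, (t:ℝ)^k * a t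
        = ∑ m ∈ Icc 1 t, ((m:ℝ)^k - ((m:ℝ)-1)^k) * a t := by
      intro t _
      rw [← Finset.sum_mul, ← telescope_pow k hk t]
    rw [Finset.sum_congr rfl h1]
    rw [Finset.sum_comm' (s := Icc 1 n) (t := fun t => Icc 1 t)
        (t' := Icc 1 n) (s' := fun m => Icc m n)]
    · apply Finset.sum_congr rfl
      intro m hm
      simp only [mem_Icc] at hm
      rw [← Finset.mul_sum]
      congr 1
      have hsplit : Icc 1 n = Icc 1 (m-1) ∪ Icc m n := by
        ext x; simp only [Finset.mem_union, mem_Icc]; omega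
      have hdisj : Disjoint (Icc 1 (m-1)) (Icc m n) := by
        rw [Finset.disjoint_left]; intro x hx hx'; simp only [mem_Icc] at hx hx'; omega
      have : A n = A (m-1) + ∑ t ∈ Icc m n, a t := by
        rw [hAdef]; simp only
        rw [hsplit, Finset.sum_union hdisj]
      linarith [this]
    · intro x y; simp only [mem_Icc]; omega
  rw [NormedAddCommGroup.tendsto_nhds_zero]
  intro ε hε
  have hε4 : (0:ℝ) < ε/4 := by linarith
  obtain ⟨N, hN⟩ := (Filter.eventually_atTop).1 ((NormedAddCommGroup.tendsto_nhds_zero.1 hA) (ε/4) hε4)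
  set C : ℝ := ∑ j ∈ Finset.range (N+1), |A j| with hC
  have hC0 : 0 ≤ C := Finset.sum_nonneg (fun j _ => abs_nonneg _)
  have hAbound : ∀ j : ℕ, |A j| ≤ ε/4 * j + C := by
    intro j
    rcases Nat.eq_zero_or_pos j with h0 | h0
    · subst h0
      have : A 0 = 0 := by simp [hAdef]
      rw [this]
      simpa using hC0
    rcases le_or_gt N j with hj | hj
    · have := hN j hj
      rw [Real.norm_eq_abs] at this
      have hjpos : (0:ℝ) < j := by exact_mod_cast h0
      have h2 : |A j| / j < ε/4 := by
        rwa [abs_div, abs_of_nonneg (le_of_lt hjpos)] at this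
      have : |A j| < ε/4 * j := by
        rw [div_lt_iff₀ hjpos] at h2; linarith
      linarith
    · have : |A j| ≤ C := by
        apply Finset.single_le_sum (f := fun i => |A i|) (fun i _ => abs_nonneg _)
        simp; omega
      linarith [mul_nonneg (le_of_lt hε4) (Nat.cast_nonneg j : (0:ℝ) ≤ j)]
  have hd0 : ∀ m : ℕ, 1 ≤ m → (0:ℝ) ≤ (m:ℝ)^k - ((m:ℝ)-1)^k := by
    intro m hm
    have hm1 : (1:ℝ) ≤ m := by exact_mod_cast hm
    have h0 : (0:ℝ) ≤ (m:ℝ)-1 := by linarith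
    have := pow_le_pow_left₀ h0 (by linarith : (m:ℝ)-1 ≤ (m:ℝ)) k
    linarith
  obtain ⟨N2, hN2⟩ := Filter.eventually_atTop.1 (Filter.Tendsto.eventually_lt
    (tendsto_const_div_atTop_nhds_zero_nat (2*C + 1)) tendsto_const_nhds (by linarith : (0:ℝ) < ε/2))
  filter_upwards [eventually_ge_atTop (max 1 N2)] with n hn
  have hn1 : 1 ≤ n := le_trans (le_max_left _ _) hn
  have hnpos : (0:ℝ) < n := by exact_mod_cast hn1
  have hpow : (0:ℝ) < (n:ℝ)^(k+1) := pow_pos hnpos _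
  rw [key, Real.norm_eq_abs, abs_div, abs_of_nonneg (le_of_lt hpow)]
  have hnum : |∑ m ∈ Icc 1 n, ((m:ℝ)^k - ((m:ℝ)-1)^k) * (A n - A (m-1))|
      ≤ ε/2 * (n:ℝ)^(k+1) + 2*C*(n:ℝ)^k := by
    calc |∑ m ∈ Icc 1 n, ((m:ℝ)^k - ((m:ℝ)-1)^k) * (A n - A (m-1))|
        ≤ ∑ m ∈ Icc 1 n, ((m:ℝ)^k - ((m:ℝ)-1)^k) * (ε/2 * n + 2*C) := by
          refine (Finset.abs_sum_le_sum_abs _ _).trans (Finset.sum_le_sum ?_)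
          intro m hm
          simp only [mem_Icc] at hm
          rw [abs_mul, abs_of_nonneg (hd0 m hm.1)]
          apply mul_le_mul_of_nonneg_left _ (hd0 m hm.1)
          have h1 := hAbound n
          have h2 := hAbound (m-1)
          have hm1 : ((m-1:ℕ):ℝ) ≤ n := by
            have : m - 1 ≤ n := by omega
            exact_mod_cast this
          calc |A n - A (m-1)| ≤ |A n| + |A (m-1)| := abs_sub _ _
            _ ≤ (ε/4 * n + C) + (ε/4 * (m-1:ℕ) + C) := by linarith
            _ ≤ ε/2 * n + 2*C := by nlinarith [hε4]
      _ = (n:ℝ)^k * (ε/2 * n + 2*C) := by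
          rw [← Finset.sum_mul, ← telescope_pow k hk n]
      _ = ε/2 * (n:ℝ)^(k+1) + 2*C*(n:ℝ)^k := by rw [pow_succ]; ring
  have hfrac : |∑ m ∈ Icc 1 n, ((m:ℝ)^k - ((m:ℝ)-1)^k) * (A n - A (m-1))| / (n:ℝ)^(k+1)
      ≤ ε/2 + (2*C)/n := by
    rw [div_le_iff₀ hpow]
    have h2 : (2*C)/n * (n:ℝ)^(k+1) = 2*C*(n:ℝ)^k := by
      rw [pow_succ]; field_simp
    nlinarith [hnum]
  have hlast : (2*C)/n < ε/2 := by
    have h2 := hN2 n (le_trans (le_max_right _ _) hn)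
    have h1 : (2*C)/n ≤ (2*C+1)/n := by gcongr; linarith
    linarith
  calc |∑ m ∈ Icc 1 n, ((m:ℝ)^k - ((m:ℝ)-1)^k) * (A n - A (m-1))| / (n:ℝ)^(k+1)
      ≤ ε/2 + (2*C)/n := hfrac
    _ < ε := by linarith

lemma geom_Icc_bound (w : ℂ) (hw : ‖w‖ = 1) (hw1 : w ≠ 1) (m : ℕ) :
    ‖∑ s ∈ Icc 1 m, w^s‖ ≤ 2 / ‖w - 1‖ := by
  have hins : Finset.range (m+1) = insert 0 (Icc 1 m) := by
    ext x; simp only [Finset.mem_range, Finset.mem_insert, mem_Icc]; omega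
  have h0 : (0:ℕ) ∉ Icc 1 m := by simp
  have hsum : ∑ s ∈ Icc 1 m, w^s = (w^(m+1) - w) / (w - 1) := by
    have hg := geom_sum_eq hw1 (m+1)
    rw [hins, Finset.sum_insert h0] at hg
    have hw0 : w - 1 ≠ 0 := sub_ne_zero.mpr hw1
    field_simp at hg ⊢
    linear_combination hg
  rw [hsum, norm_div]
  have hne : (0:ℝ) < ‖w - 1‖ := norm_pos_iff.mpr (sub_ne_zero.mpr hw1)
  gcongr
  calc ‖w^(m+1) - w‖ ≤ ‖w^(m+1)‖ + ‖w‖ := norm_sub_le _ _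
    _ = 2 := by rw [norm_pow, hw]; norm_num

lemma quasiperiodic_bounded (u : ℕ → ℂ) (hu : ∀ t, ‖u t‖ ≤ 1) (q : ℕ) (hq : 1 ≤ q)
    (z : ℂ) (hz : ‖z‖ = 1) (hz1 : z ≠ 1) (hrec : ∀ t, u (t + q) = z * u t) :
    ∀ n, ‖∑ t ∈ Icc 1 n, u t‖ ≤ (2/‖z-1‖) * ‖∑ t ∈ Icc 1 q, u t‖ + q := by
  have hIoc : Ioc 0 q = Icc 1 q := by ext x; simp only [mem_Ioc, mem_Icc]; omega
  have step1 : ∀ j, ∑ t ∈ Icc 1 q, u (t + q*j) = z^j * ∑ t ∈ Icc 1 q, u t := by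
    intro j
    induction j with
    | zero => simp
    | succ j ih =>
      have : ∀ t, u (t + q*(j+1)) = z * u (t + q*j) := by
        intro t
        have : t + q*(j+1) = (t + q*j) + q := by ring
        rw [this, hrec]
      rw [Finset.sum_congr rfl (fun t _ => this t), ← Finset.mul_sum, ih, pow_succ]
      ring
  have step2 : ∀ j, ∑ t ∈ Icc 1 (q*j), u t = (∑ i ∈ range j, z^i) * ∑ t ∈ Icc 1 q, u t := by
    intro j
    induction j with
    | zero => simp
    | succ j ih =>
      have hsplit : Icc 1 (q*(j+1)) = Icc 1 (q*j) ∪ Ioc (q*j) (q + q*j) := by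
        ext x; simp only [Finset.mem_union, mem_Icc, mem_Ioc]
        constructor
        · intro hx; rcases le_or_gt x (q*j) with h | h
          · left; exact ⟨hx.1, h⟩
          · right; refine ⟨h, ?_⟩; nlinarith [hx.2]
        · intro hx; rcases hx with h | h
          · exact ⟨h.1, le_trans h.2 (by nlinarith)⟩
          · constructor
            · have := h.1; omega
            · have := h.2; nlinarith
      have hdisj : Disjoint (Icc 1 (q*j)) (Ioc (q*j) (q + q*j)) := by
        rw [Finset.disjoint_left]; intro x hx hx'
        simp only [mem_Icc] at hx; simp only [mem_Ioc] at hx'; omega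
      have hmap : ∑ t ∈ Ioc (q*j) (q + q*j), u t = ∑ t ∈ Icc 1 q, u (t + q*j) := by
        have hm := Finset.sum_map (Ioc 0 q) (addRightEmbedding (q*j)) u
        rw [Finset.map_add_right_Ioc, zero_add] at hm
        rw [hm, ← hIoc]
        simp [addRightEmbedding]
      rw [hsplit, Finset.sum_union hdisj, ih, hmap, step1 j, Finset.sum_range_succ]
      ring
  intro n
  set j := n / q with hj
  have hqj : q * j ≤ n := Nat.mul_div_le n q
  have hsplit : Icc 1 n = Icc 1 (q*j) ∪ Ioc (q*j) n := by
    ext x; simp only [Finset.mem_union, mem_Icc, mem_Ioc]; omega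
  have hdisj : Disjoint (Icc 1 (q*j)) (Ioc (q*j) n) := by
    rw [Finset.disjoint_left]; intro x hx hx'
    simp only [mem_Icc] at hx; simp only [mem_Ioc] at hx'; omega
  rw [hsplit, Finset.sum_union hdisj]
  have h1 : ‖∑ t ∈ Icc 1 (q*j), u t‖ ≤ (2/‖z-1‖) * ‖∑ t ∈ Icc 1 q, u t‖ := by
    rw [step2 j, norm_mul]
    apply mul_le_mul_of_nonneg_right _ (norm_nonneg _)
    rw [geom_sum_eq hz1, norm_div]
    have hne : (0:ℝ) < ‖z - 1‖ := norm_pos_iff.mpr (sub_ne_zero.mpr hz1)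
    gcongr
    calc ‖z^j - 1‖ ≤ ‖z^j‖ + ‖(1:ℂ)‖ := norm_sub_le _ _
      _ = 2 := by rw [norm_pow, hz]; norm_num
  have h2 : ‖∑ t ∈ Ioc (q*j) n, u t‖ ≤ q := by
    calc ‖∑ t ∈ Ioc (q*j) n, u t‖ ≤ ∑ t ∈ Ioc (q*j) n, ‖u t‖ := norm_sum_le _ _
      _ ≤ ∑ _t ∈ Ioc (q*j) n, 1 := Finset.sum_le_sum (fun t _ => hu t)
      _ = ((Ioc (q*j) n).card : ℝ) := by rw [Finset.sum_const]; simp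
      _ ≤ q := by
          rw [Nat.card_Ioc]
          have h1 : q * j + n % q = n := by rw [hj]; exact Nat.div_add_mod n q
          have h2 := Nat.mod_lt n (show 0 < q by omega)
          have : n - q*j ≤ q := by omega
          exact_mod_cast this
  calc ‖∑ t ∈ Icc 1 (q*j), u t + ∑ t ∈ Ioc (q*j) n, u t‖
      ≤ ‖∑ t ∈ Icc 1 (q*j), u t‖ + ‖∑ t ∈ Ioc (q*j) n, u t‖ := norm_add_le _ _
    _ ≤ (2/‖z-1‖) * ‖∑ t ∈ Icc 1 q, u t‖ + q := by linarith

lemma vdc (u : ℕ → ℂ) (hu : ∀ t, ‖u t‖ = 1) (n : ℕ) :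
    ‖∑ t ∈ Icc 1 n, u t‖^2
      ≤ (n:ℝ) + 2 * ∑ h ∈ Icc 1 (n-1), ‖∑ t ∈ Icc 1 (n-h), u (t+h) * (starRingEnd ℂ) (u t)‖ := by
  set S := ∑ t ∈ Icc 1 n, u t with hS
  set T : ℂ := ∑ t ∈ Icc 1 n, ∑ s ∈ Icc 1 (t-1), u t * (starRingEnd ℂ) (u s) with hT
  have hsq : (‖S‖:ℝ)^2 = (S * (starRingEnd ℂ) S).re := by
    rw [Complex.mul_conj]
    rw [Complex.ofReal_re, Complex.normSq_eq_norm_sq]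
  have hexpand : S * (starRingEnd ℂ) S = (n:ℂ) + (T + (starRingEnd ℂ) T) := by
    rw [hS, map_sum, Finset.sum_mul_sum]
    have hsplit : ∀ t ∈ Icc 1 n,
        ∑ s ∈ Icc 1 n, u t * (starRingEnd ℂ) (u s)
          = u t * (starRingEnd ℂ) (u t) + (∑ s ∈ Icc 1 (t-1), u t * (starRingEnd ℂ) (u s)
            + ∑ s ∈ Icc (t+1) n, u t * (starRingEnd ℂ) (u s)) := by
      intro t ht
      simp only [mem_Icc] at ht
      have h1 : Icc 1 n = insert t (Icc 1 (t-1) ∪ Icc (t+1) n) := by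
        ext x; simp only [Finset.mem_insert, Finset.mem_union, mem_Icc]; omega
      have h2 : t ∉ Icc 1 (t-1) ∪ Icc (t+1) n := by
        simp only [Finset.mem_union, mem_Icc]; omega
      have h3 : Disjoint (Icc 1 (t-1)) (Icc (t+1) n) := by
        rw [Finset.disjoint_left]; intro x hx hx'
        simp only [mem_Icc] at hx hx'; omega
      rw [h1, Finset.sum_insert h2, Finset.sum_union h3]
    rw [Finset.sum_congr rfl hsplit, Finset.sum_add_distrib, Finset.sum_add_distrib]
    have hdiag : ∑ t ∈ Icc 1 n, u t * (starRingEnd ℂ) (u t) = (n:ℂ) := by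
      have : ∀ t ∈ Icc 1 n, u t * (starRingEnd ℂ) (u t) = 1 := by
        intro t _
        rw [Complex.mul_conj]
        have : ‖u t‖ = 1 := hu t
        simp [Complex.normSq_eq_norm_sq, this]
      rw [Finset.sum_congr rfl this, Finset.sum_const, Nat.card_Icc]
      simp
    have hconj : ∑ t ∈ Icc 1 n, ∑ s ∈ Icc (t+1) n, u t * (starRingEnd ℂ) (u s)
        = (starRingEnd ℂ) T := by
      rw [hT, map_sum]
      rw [Finset.sum_comm' (t' := Icc 1 n) (s' := fun s => Icc 1 (s-1))]
      · apply Finset.sum_congr rfl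
        intro s _
        rw [map_sum]
        apply Finset.sum_congr rfl
        intro t _
        simp [mul_comm]
      · intro x y; simp only [mem_Icc]; omega
    rw [hdiag, hconj]
  have hTre : (T + (starRingEnd ℂ) T).re = 2 * T.re := by
    simp [Complex.add_re, Complex.conj_re]; ring
  have hTbound : T.re ≤ ∑ h ∈ Icc 1 (n-1), ‖∑ t ∈ Icc 1 (n-h), u (t+h) * (starRingEnd ℂ) (u t)‖ := by
    have hreindex : T = ∑ h ∈ Icc 1 (n-1), ∑ t ∈ Icc 1 (n-h), u (t+h) * (starRingEnd ℂ) (u t) := by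
      rw [hT, Finset.sum_sigma', Finset.sum_sigma']
      apply Finset.sum_nbij' (i := fun x => (⟨x.1 - x.2, x.2⟩ : Σ _ : ℕ, ℕ))
        (j := fun x => (⟨x.2 + x.1, x.2⟩ : Σ _ : ℕ, ℕ))
      · intro x hx
        simp only [Finset.mem_sigma, mem_Icc] at hx ⊢; omega
      · intro x hx
        simp only [Finset.mem_sigma, mem_Icc] at hx ⊢; omega
      · intro x hx
        simp only [Finset.mem_sigma, mem_Icc] at hx
        have : x.2 + (x.1 - x.2) = x.1 := by omega
        exact Sigma.ext (by simpa using this) (by simp)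
      · intro x hx
        simp only [Finset.mem_sigma, mem_Icc] at hx
        exact Sigma.ext (by simp) (by simp)
      · intro x hx
        simp only [Finset.mem_sigma, mem_Icc] at hx
        have : x.2 + (x.1 - x.2) = x.1 := by omega
        rw [this]
    calc T.re ≤ ‖T‖ := Complex.re_le_norm T
      _ ≤ ∑ h ∈ Icc 1 (n-1), ‖∑ t ∈ Icc 1 (n-h), u (t+h) * (starRingEnd ℂ) (u t)‖ := by
          rw [hreindex]; exact norm_sum_le _ _
  calc (‖S‖:ℝ)^2 = (S * (starRingEnd ℂ) S).re := hsq
    _ = (n:ℝ) + 2 * T.re := by rw [hexpand]; simp [hTre]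
    _ ≤ (n:ℝ) + 2 * ∑ h ∈ Icc 1 (n-1), ‖∑ t ∈ Icc 1 (n-h), u (t+h) * (starRingEnd ℂ) (u t)‖ := by
        linarith

lemma minsum (g : ℕ → ℝ) (hg0 : ∀ h, 0 ≤ g h) (hgpos : ∀ h, 1 ≤ h → g h ≠ 0)
    (hsub : ∀ h d, g d ≤ g (h + d) + g h) :
    Tendsto (fun n : ℕ => (∑ h ∈ Icc 1 n, min (n:ℝ) (2 / g h)) / (n:ℝ)^2) atTop (nhds 0) := by
  rw [NormedAddCommGroup.tendsto_nhds_zero]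
  intro ε hε
  obtain ⟨M, hM⟩ := exists_nat_gt (4/ε)
  have hM1 : 1 ≤ M := by
    by_contra h
    push_neg at h
    interval_cases M
    simp at hM
    have hp : 0 < 4/ε := by positivity
    linarith
  have hMpos : (0:ℝ) < M := by exact_mod_cast hM1
  have hMε : 1/(M:ℝ) < ε/4 := by
    rw [div_lt_div_iff₀ hMpos (by norm_num)]
    have h4 : 4/ε < M := hM
    rw [div_lt_iff₀ hε] at h4
    linarith
  -- minimal value of g on Icc 1 M
  have hne : ((Icc 1 M).image g).Nonempty := by
    apply Finset.Nonempty.image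
    exact ⟨1, by simp; omega⟩
  set m₀ := ((Icc 1 M).image g).min' hne with hm₀
  have hm₀mem : m₀ ∈ (Icc 1 M).image g := Finset.min'_mem _ _
  have hm₀pos : 0 < m₀ := by
    simp only [Finset.mem_image, mem_Icc] at hm₀mem
    obtain ⟨d, hd, hgd⟩ := hm₀mem
    rw [← hgd]
    exact lt_of_le_of_ne (hg0 d) (Ne.symm (hgpos d hd.1))
  have hm₀le : ∀ d, 1 ≤ d → d ≤ M → m₀ ≤ g d := by
    intro d h1 h2
    apply Finset.min'_le
    exact Finset.mem_image_of_mem g (by simp; omega)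
  set δ := m₀/3 with hδ
  have hδpos : 0 < δ := by positivity
  obtain ⟨N2, hN2⟩ := Filter.eventually_atTop.1 (Filter.Tendsto.eventually_lt
    (tendsto_const_div_atTop_nhds_zero_nat (1 + 2/δ)) tendsto_const_nhds
    (by linarith : (0:ℝ) < ε/2))
  filter_upwards [eventually_ge_atTop (max 1 N2)] with n hn
  have hn1 : 1 ≤ n := le_trans (le_max_left _ _) hn
  have hnpos : (0:ℝ) < n := by exact_mod_cast hn1
  set B := (Icc 1 n).filter (fun h => g h ≤ δ) with hB
  -- separation
  have hkey : ∀ a b, a ∈ B → b ∈ B → a < b → (a-1)/M = (b-1)/M → False := by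
    intro a b ha hb hab hdiv
    simp only [hB, Finset.mem_filter, mem_Icc] at ha hb
    -- first: b - a > M
    have hgap : M < b - a := by
      by_contra hle
      push_neg at hle
      have h1 : 1 ≤ b - a := by omega
      have h2 := hsub a (b - a)
      have h3 : a + (b - a) = b := by omega
      rw [h3] at h2
      have h4 := hm₀le (b-a) h1 hle
      have : m₀ ≤ 2*δ := by linarith [ha.2, hb.2]
      rw [hδ] at this
      linarith
    have e1 := Nat.div_add_mod (a-1) M
    have e2 := Nat.div_add_mod (b-1) M
    rw [← hdiv] at e2
    have f1 := Nat.mod_lt (a-1) (show 0 < M by omega)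
    have f2 := Nat.mod_lt (b-1) (show 0 < M by omega)
    omega
  have hcard : B.card ≤ n/M + 1 := by
    have := Finset.card_le_card_of_injOn (f := fun h => (h-1)/M)
      (s := B) (t := Finset.range (n/M + 1)) ?_ ?_
    · simpa using this
    · intro h hh
      simp only [hB, Finset.mem_coe, Finset.mem_filter, mem_Icc] at hh
      simp only [Finset.mem_coe, Finset.mem_range]
      have : (h-1)/M ≤ n/M := Nat.div_le_div_right (by omega)
      omega
    · intro a ha b hb hfab
      simp only at hfab
      rcases lt_trichotomy a b with h | h | h
      · exact absurd hfab (fun hf => hkey a b ha hb h hf)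
      · exact h
      · exact absurd hfab.symm (fun hf => hkey b a hb ha h hf)
  -- sum bound
  have hmin0 : ∀ h, 0 ≤ min (n:ℝ) (2 / g h) := by
    intro h
    exact le_min (le_of_lt hnpos) (div_nonneg (by norm_num) (hg0 h))
  have hsum_nonneg : 0 ≤ ∑ h ∈ Icc 1 n, min (n:ℝ) (2 / g h) :=
    Finset.sum_nonneg (fun h _ => hmin0 h)
  have hsplit := Finset.sum_filter_add_sum_filter_not (Icc 1 n) (fun h => g h ≤ δ)
    (fun h => min (n:ℝ) (2 / g h))
  have hBsum : ∑ h ∈ B, min (n:ℝ) (2 / g h) ≤ ((n:ℝ)^2/M + n) := by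
    calc ∑ h ∈ B, min (n:ℝ) (2 / g h) ≤ ∑ _h ∈ B, (n:ℝ) :=
          Finset.sum_le_sum (fun h _ => min_le_left _ _)
      _ = B.card * n := by rw [Finset.sum_const]; simp [mul_comm]
      _ ≤ ((n/M : ℕ) + 1 : ℝ) * n := by
          apply mul_le_mul_of_nonneg_right _ (le_of_lt hnpos)
          exact_mod_cast hcard
      _ ≤ ((n:ℝ)/M + 1) * n := by
          apply mul_le_mul_of_nonneg_right _ (le_of_lt hnpos)
          have := Nat.cast_div_le (α := ℝ) (m := n) (n := M)
          linarith
      _ = (n:ℝ)^2/M + n := by field_simp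
  have hCsum : ∑ h ∈ (Icc 1 n).filter (fun h => ¬ g h ≤ δ), min (n:ℝ) (2 / g h)
      ≤ (n:ℝ) * (2/δ) := by
    calc ∑ h ∈ (Icc 1 n).filter (fun h => ¬ g h ≤ δ), min (n:ℝ) (2 / g h)
        ≤ ∑ _h ∈ (Icc 1 n).filter (fun h => ¬ g h ≤ δ), (2/δ) := by
          apply Finset.sum_le_sum
          intro h hh
          simp only [Finset.mem_filter, mem_Icc, not_le] at hh
          refine le_trans (min_le_right _ _) ?_
          apply div_le_div_of_nonneg_left (by norm_num) hδpos (le_of_lt hh.2)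
      _ = ((Icc 1 n).filter (fun h => ¬ g h ≤ δ)).card * (2/δ) := by
          rw [Finset.sum_const]; simp
      _ ≤ (n:ℝ) * (2/δ) := by
          apply mul_le_mul_of_nonneg_right _ (by positivity)
          have h1 : ((Icc 1 n).filter (fun h => ¬ g h ≤ δ)).card ≤ (Icc 1 n).card :=
            Finset.card_filter_le _ _
          have h2 : (Icc 1 n).card = n := by rw [Nat.card_Icc]; omega
          calc (((Icc 1 n).filter (fun h => ¬ g h ≤ δ)).card : ℝ) ≤ ((Icc 1 n).card : ℝ) := by
                exact_mod_cast h1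
            _ = n := by rw [h2]
  have htotal : ∑ h ∈ Icc 1 n, min (n:ℝ) (2 / g h) ≤ (n:ℝ)^2/M + n + n*(2/δ) := by
    rw [← hsplit]
    have := hBsum
    rw [hB] at this
    linarith
  have hn2 : (0:ℝ) < (n:ℝ)^2 := by positivity
  rw [Real.norm_eq_abs, abs_div, abs_of_nonneg hsum_nonneg, abs_of_nonneg (le_of_lt hn2)]
  have hid : (1/(M:ℝ) + (1 + 2/δ)/n)*(n:ℝ)^2 = (n:ℝ)^2/M + n + n*(2/δ) := by
    field_simp
    ring
  have hfrac : (∑ h ∈ Icc 1 n, min (n:ℝ) (2 / g h)) / (n:ℝ)^2 ≤ 1/(M:ℝ) + (1 + 2/δ)/n := by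
    rw [div_le_iff₀ hn2, hid]
    exact htotal
  have hlast : (1 + 2/δ)/n < ε/2 := hN2 n (le_trans (le_max_right _ _) hn)
  calc (∑ h ∈ Icc 1 n, min (n:ℝ) (2 / g h)) / (n:ℝ)^2 ≤ 1/(M:ℝ) + (1 + 2/δ)/n := hfrac
    _ < ε/4 + ε/2 := by linarith
    _ < ε := by linarith
lemma weyl (θ₁ θ₂ : ℝ) (hbad : ¬((∃ a : ℚ, θ₁ = π * a) ∧ (∃ b : ℚ, θ₂ = π * b))) :
    Tendsto (fun n : ℕ => (∑ t ∈ Icc 1 n, Real.cos (2*θ₁*t + 2*θ₂*(t:ℝ)^2)) / n)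
      atTop (nhds 0) := by
  set φ : ℕ → ℝ := fun t => 2*θ₁*t + 2*θ₂*(t:ℝ)^2 with hφ
  set u : ℕ → ℂ := fun t => Complex.exp ((φ t : ℂ) * Complex.I) with hu
  have hunorm : ∀ t, ‖u t‖ = 1 := by
    intro t
    rw [hu]
    exact Complex.norm_exp_ofReal_mul_I _
  have hure : ∀ t, (u t).re = Real.cos (φ t) := by
    intro t
    rw [hu]
    exact Complex.exp_ofReal_mul_I_re _
  have habs : ∀ n : ℕ, |∑ t ∈ Icc 1 n, Real.cos (2*θ₁*t + 2*θ₂*(t:ℝ)^2)|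
      ≤ ‖∑ t ∈ Icc 1 n, u t‖ := by
    intro n
    have h1 : ∑ t ∈ Icc 1 n, Real.cos (2*θ₁*t + 2*θ₂*(t:ℝ)^2) = (∑ t ∈ Icc 1 n, u t).re := by
      rw [Complex.re_sum]
      exact Finset.sum_congr rfl (fun t _ => (hure t).symm)
    rw [h1]
    exact Complex.abs_re_le_norm _
  suffices hS : Tendsto (fun n : ℕ => ‖∑ t ∈ Icc 1 n, u t‖ / n) atTop (nhds 0) by
    refine squeeze_zero_norm (fun n => ?_) hS
    rw [Real.norm_eq_abs, abs_div, abs_of_nonneg (Nat.cast_nonneg n : (0:ℝ) ≤ n)]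
    gcongr
    exact habs n
  by_cases hb : ∃ b : ℚ, θ₂ = π * b
  · -- θ₂ rational multiple of π, θ₁ not
    obtain ⟨b, hθ₂⟩ := hb
    have ha : ¬ ∃ a : ℚ, θ₁ = π * a := fun h => hbad ⟨h, ⟨b, hθ₂⟩⟩
    set q : ℕ := b.den with hqdef
    have hq1 : 1 ≤ q := b.pos
    have hq0 : (q:ℝ) ≠ 0 := by positivity
    have hbq : (b:ℝ) * (q:ℝ) = (b.num:ℝ) := by
      rw [Rat.cast_def]
      field_simp
      rfl
    set c : ℝ := 2*θ₁*q + 2*θ₂*(q:ℝ)^2 with hc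
    set z : ℂ := Complex.exp ((c:ℂ) * Complex.I) with hz
    have hznorm : ‖z‖ = 1 := by
      rw [hz]; exact Complex.norm_exp_ofReal_mul_I _
    have hrec : ∀ t, u (t + q) = z * u t := by
      intro t
      have hd : (4*θ₂*q*t : ℝ) = ((2*b.num*t : ℤ) : ℝ) * (2*π) := by
        push_cast
        rw [hθ₂]
        linear_combination (4*π*(t:ℝ)) * hbq
      have hφeq : φ (t + q) = φ t + c + 4*θ₂*q*t := by
        simp only [hφ, hc]
        push_cast
        ring
      have hexpd : Complex.exp (((4*θ₂*q*t : ℝ) : ℂ) * Complex.I) = 1 := by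
        rw [show (((4*θ₂*q*t : ℝ)) : ℂ) * Complex.I = ((2*b.num*t : ℤ) : ℂ) * (2*(π:ℂ)*Complex.I) by
          rw [hd]; push_cast; ring]
        exact Complex.exp_int_mul_two_pi_mul_I _
      calc u (t + q) = Complex.exp ((φ (t+q) : ℂ) * Complex.I) := rfl
        _ = Complex.exp ((φ t : ℂ) * Complex.I + (c:ℂ) * Complex.I
              + ((4*θ₂*q*t : ℝ) : ℂ) * Complex.I) := by
            rw [hφeq]; push_cast; ring_nf
        _ = u t * z * Complex.exp (((4*θ₂*q*t : ℝ) : ℂ) * Complex.I) := by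
            rw [Complex.exp_add, Complex.exp_add]
        _ = z * u t := by rw [hexpd, mul_one, mul_comm]
    have hz1 : z ≠ 1 := by
      intro hzz
      rw [hz, Complex.exp_eq_one_iff] at hzz
      obtain ⟨m, hm⟩ := hzz
      have hcc : (c : ℂ) = (m:ℂ) * (2*(π:ℂ)) := by
        apply mul_right_cancel₀ Complex.I_ne_zero
        linear_combination hm
      have hcr : c = m * (2*π) := by exact_mod_cast hcc
      apply ha
      refine ⟨((m - b.num * q : ℤ) : ℚ) / (q : ℚ), ?_⟩
      rw [hc, hθ₂] at hcr
      push_cast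
      rw [← mul_div_assoc, eq_div_iff hq0]
      linear_combination (1/2)*hcr - π*(q:ℝ)*hbq
    have hbound := quasiperiodic_bounded u (fun t => le_of_eq (hunorm t)) q hq1 z hznorm hz1 hrec
    set C : ℝ := (2/‖z-1‖) * ‖∑ t ∈ Icc 1 q, u t‖ + q with hC
    apply squeeze_zero_norm (a := fun n : ℕ => C / n)
    · intro n
      rw [Real.norm_eq_abs, abs_div, abs_of_nonneg (Nat.cast_nonneg n : (0:ℝ) ≤ n),
        abs_of_nonneg (norm_nonneg (∑ t ∈ Icc 1 n, u t))]
      gcongr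
      exact hbound n
    · exact tendsto_const_div_atTop_nhds_zero_nat C
  · -- θ₂ not a rational multiple of π
    have hw1 : ∀ h : ℕ, 1 ≤ h → Complex.exp (((4*θ₂*h : ℝ):ℂ) * Complex.I) ≠ 1 := by
      intro h hh hone
      rw [Complex.exp_eq_one_iff] at hone
      obtain ⟨m, hm⟩ := hone
      have hmm : (4*θ₂*h : ℝ) = m * (2*π) := by
        have hcc : ((4*θ₂*h : ℝ):ℂ) = (m:ℂ) * (2*(π:ℂ)) := by
          apply mul_right_cancel₀ Complex.I_ne_zero
          linear_combination hm
        exact_mod_cast hcc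
      apply hb
      refine ⟨(m : ℚ) / (2*h : ℚ), ?_⟩
      have hh0 : (h:ℝ) ≠ 0 := by positivity
      push_cast
      rw [← mul_div_assoc, eq_div_iff (by positivity)]
      linear_combination (1/2)*hmm
    set g : ℕ → ℝ := fun h => ‖Complex.exp (((4*θ₂*h : ℝ):ℂ) * Complex.I) - 1‖ with hg
    have hwnorm : ∀ h : ℕ, ‖Complex.exp (((4*θ₂*h : ℝ):ℂ) * Complex.I)‖ = 1 := by
      intro h; exact Complex.norm_exp_ofReal_mul_I _
    have hg0 : ∀ h, 0 ≤ g h := fun h => norm_nonneg _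
    have hgpos : ∀ h, 1 ≤ h → g h ≠ 0 := by
      intro h hh
      simp only [hg]
      rw [norm_ne_zero_iff]
      exact sub_ne_zero.mpr (hw1 h hh)
    have hwadd : ∀ h d : ℕ, Complex.exp (((4*θ₂*((h+d : ℕ)) : ℝ):ℂ) * Complex.I)
        = Complex.exp (((4*θ₂*h : ℝ):ℂ) * Complex.I) * Complex.exp (((4*θ₂*d : ℝ):ℂ) * Complex.I) := by
      intro h d
      rw [← Complex.exp_add]
      congr 1
      push_cast
      ring
    have hsub : ∀ h d, g d ≤ g (h + d) + g h := by
      intro h d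
      simp only [hg]
      have h1 : Complex.exp (((4*θ₂*h : ℝ):ℂ) * Complex.I) * (Complex.exp (((4*θ₂*d : ℝ):ℂ) * Complex.I) - 1)
          = Complex.exp (((4*θ₂*((h+d : ℕ)) : ℝ):ℂ) * Complex.I) - Complex.exp (((4*θ₂*h : ℝ):ℂ) * Complex.I) := by
        rw [hwadd h d]; ring
      calc ‖Complex.exp (((4*θ₂*d : ℝ):ℂ) * Complex.I) - 1‖
          = ‖Complex.exp (((4*θ₂*h : ℝ):ℂ) * Complex.I) * (Complex.exp (((4*θ₂*d : ℝ):ℂ) * Complex.I) - 1)‖ := by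
            rw [norm_mul, hwnorm, one_mul]
        _ = ‖Complex.exp (((4*θ₂*((h+d : ℕ)) : ℝ):ℂ) * Complex.I) - Complex.exp (((4*θ₂*h : ℝ):ℂ) * Complex.I)‖ := by
            rw [h1]
        _ ≤ ‖Complex.exp (((4*θ₂*((h+d : ℕ)) : ℝ):ℂ) * Complex.I) - 1‖ + ‖Complex.exp (((4*θ₂*h : ℝ):ℂ) * Complex.I) - 1‖ := by
            have := norm_sub_le (Complex.exp (((4*θ₂*((h+d : ℕ)) : ℝ):ℂ) * Complex.I) - 1)
              (Complex.exp (((4*θ₂*h : ℝ):ℂ) * Complex.I) - 1)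
            simpa using this
    -- correlation computation
    have hcorr : ∀ h t : ℕ, u (t + h) * (starRingEnd ℂ) (u t)
        = Complex.exp (((2*θ₁*h + 2*θ₂*(h:ℝ)^2 : ℝ):ℂ) * Complex.I)
            * (Complex.exp (((4*θ₂*h : ℝ):ℂ) * Complex.I))^t := by
      intro h t
      have hconj : (starRingEnd ℂ) (u t) = Complex.exp (-((φ t : ℝ):ℂ) * Complex.I) := by
        rw [hu]
        simp only
        rw [← Complex.exp_conj]
        congr 1
        simp [Complex.ext_iff]
      rw [hu]
      simp only
      rw [hconj, ← Complex.exp_add, ← Complex.exp_nat_mul, ← Complex.exp_add]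
      congr 1
      simp only [hφ]
      push_cast
      ring
    have hinner : ∀ n : ℕ, ∀ h ∈ Icc 1 (n-1),
        ‖∑ t ∈ Icc 1 (n-h), u (t+h) * (starRingEnd ℂ) (u t)‖ ≤ min (n:ℝ) (2 / g h) := by
      intro n h hh
      simp only [mem_Icc] at hh
      have hrw : ∑ t ∈ Icc 1 (n-h), u (t+h) * (starRingEnd ℂ) (u t)
          = Complex.exp (((2*θ₁*h + 2*θ₂*(h:ℝ)^2 : ℝ):ℂ) * Complex.I)
            * ∑ t ∈ Icc 1 (n-h), (Complex.exp (((4*θ₂*h : ℝ):ℂ) * Complex.I))^t := by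
        rw [Finset.mul_sum]
        exact Finset.sum_congr rfl (fun t _ => hcorr h t)
      rw [hrw, norm_mul]
      have h2 : ‖Complex.exp (((2*θ₁*h + 2*θ₂*(h:ℝ)^2 : ℝ):ℂ) * Complex.I)‖ = 1 := by
        exact Complex.norm_exp_ofReal_mul_I _
      rw [h2, one_mul]
      apply le_min
      · calc ‖∑ t ∈ Icc 1 (n-h), (Complex.exp (((4*θ₂*h : ℝ):ℂ) * Complex.I))^t‖
            ≤ ∑ t ∈ Icc 1 (n-h), ‖(Complex.exp (((4*θ₂*h : ℝ):ℂ) * Complex.I))^t‖ := norm_sum_le _ _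
          _ = ∑ _t ∈ Icc 1 (n-h), (1:ℝ) := by
              apply Finset.sum_congr rfl
              intro t _
              rw [norm_pow, hwnorm, one_pow]
          _ = ((n-h : ℕ):ℝ) := by rw [Finset.sum_const, Nat.card_Icc]; simp
          _ ≤ (n:ℝ) := by
              have : n - h ≤ n := Nat.sub_le _ _
              exact_mod_cast this
      · exact geom_Icc_bound _ (hwnorm h) (hw1 h hh.1) _
    -- apply vdc and minsum
    have hminsum := minsum g hg0 hgpos hsub
    set R : ℕ → ℝ := fun n => 1/(n:ℝ) + 2 * ((∑ h ∈ Icc 1 n, min (n:ℝ) (2 / g h)) / (n:ℝ)^2) with hR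
    have hRtend : Tendsto R atTop (nhds 0) := by
      have h1 : Tendsto (fun n : ℕ => 1/(n:ℝ)) atTop (nhds 0) := tendsto_one_div_atTop_nhds_zero_nat
      have h2 := hminsum.const_mul (2:ℝ)
      rw [mul_zero] at h2
      have := h1.add h2
      rw [add_zero] at this
      exact this
    have hsq : ∀ n : ℕ, 1 ≤ n → (‖∑ t ∈ Icc 1 n, u t‖ / n)^2 ≤ R n := by
      intro n hn
      have hnpos : (0:ℝ) < n := by exact_mod_cast hn
      have hvdc := vdc u hunorm n
      have hstep : ∑ h ∈ Icc 1 (n-1), ‖∑ t ∈ Icc 1 (n-h), u (t+h) * (starRingEnd ℂ) (u t)‖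
          ≤ ∑ h ∈ Icc 1 n, min (n:ℝ) (2 / g h) := by
        calc ∑ h ∈ Icc 1 (n-1), ‖∑ t ∈ Icc 1 (n-h), u (t+h) * (starRingEnd ℂ) (u t)‖
            ≤ ∑ h ∈ Icc 1 (n-1), min (n:ℝ) (2 / g h) :=
              Finset.sum_le_sum (hinner n)
          _ ≤ ∑ h ∈ Icc 1 n, min (n:ℝ) (2 / g h) := by
              apply Finset.sum_le_sum_of_subset_of_nonneg
              · apply Finset.Icc_subset_Icc_right; omega
              · intro h _ _
                exact le_min (le_of_lt hnpos) (div_nonneg (by norm_num) (hg0 h))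
      rw [div_pow]
      rw [div_le_iff₀ (by positivity)]
      rw [hR]
      have hexp : (1/(n:ℝ) + 2 * ((∑ h ∈ Icc 1 n, min (n:ℝ) (2 / g h)) / (n:ℝ)^2)) * (n:ℝ)^2
          = (n:ℝ) + 2 * ∑ h ∈ Icc 1 n, min (n:ℝ) (2 / g h) := by
        field_simp
      rw [hexp]
      linarith [hvdc, hstep]
    apply squeeze_zero_norm' (a := fun n : ℕ => Real.sqrt (R n))
    · filter_upwards [eventually_ge_atTop 1] with n hn
      rw [Real.norm_eq_abs, abs_of_nonneg (div_nonneg (norm_nonneg _) (Nat.cast_nonneg n))]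
      exact Real.le_sqrt_of_sq_le (hsq n hn)
    · have hcont := (Real.continuous_sqrt.tendsto 0).comp hRtend
      simpa [Function.comp_def] using hcont

theorem weighted_average_sin_sq :
    ∃ E : Set (ℝ × ℝ), E.Countable ∧
      ∀ θ₁ ∈ Set.Ioo (0:ℝ) π, ∀ θ₂ ∈ Set.Ioo (0:ℝ) π, (θ₁, θ₂) ∉ E →
        ∀ k : ℕ,
          Tendsto (fun n : ℕ =>
              (1 / (n:ℝ)^(k+1)) *
                ∑ t ∈ Finset.Icc 1 n, (t:ℝ)^k * (Real.sin (θ₁ * t + θ₂ * (t:ℝ)^2))^2)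
            atTop (nhds (1 / (2 * ((k:ℝ) + 1)))) := by
  refine ⟨(Set.range fun q : ℚ => π*(q:ℝ)) ×ˢ (Set.range fun q : ℚ => π*(q:ℝ)), ?_, ?_⟩
  · exact (Set.countable_range _).prod (Set.countable_range _)
  · intro θ₁ _ θ₂ _ hE k
    have hbad : ¬((∃ a : ℚ, θ₁ = π * a) ∧ (∃ b : ℚ, θ₂ = π * b)) := by
      rintro ⟨⟨a, ha⟩, ⟨b, hb⟩⟩
      exact hE (Set.mem_prod.mpr ⟨⟨a, ha.symm⟩, ⟨b, hb.symm⟩⟩)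
    have hcos := weyl θ₁ θ₂ hbad
    have habel := abel_o k (fun t => Real.cos (2*θ₁*t + 2*θ₂*(t:ℝ)^2)) hcos
    have hL1 := L1 k
    have heq : ∀ n : ℕ,
        (1/2 : ℝ) * ((∑ t ∈ Icc 1 n, (t:ℝ)^k) / (n:ℝ)^(k+1))
          - (1/2 : ℝ) * ((∑ t ∈ Icc 1 n, (t:ℝ)^k * Real.cos (2*θ₁*t + 2*θ₂*(t:ℝ)^2)) / (n:ℝ)^(k+1))
        = (1 / (n:ℝ)^(k+1)) *
            ∑ t ∈ Finset.Icc 1 n, (t:ℝ)^k * (Real.sin (θ₁ * t + θ₂ * (t:ℝ)^2))^2 := by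
      intro n
      have hsummand : ∀ t ∈ Icc 1 n, (t:ℝ)^k * (Real.sin (θ₁ * t + θ₂ * (t:ℝ)^2))^2
          = (1/2) * (t:ℝ)^k - (1/2) * ((t:ℝ)^k * Real.cos (2*θ₁*t + 2*θ₂*(t:ℝ)^2)) := by
        intro t _
        rw [Real.sin_sq_eq_half_sub]
        rw [show 2 * (θ₁ * t + θ₂ * (t:ℝ)^2) = 2*θ₁*t + 2*θ₂*(t:ℝ)^2 by ring]
        ring
      rw [Finset.sum_congr rfl hsummand, Finset.sum_sub_distrib, ← Finset.mul_sum, ← Finset.mul_sum]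
      simp only [div_eq_mul_inv]
      ring
    have hfinal := (hL1.const_mul (1/2 : ℝ)).sub (habel.const_mul (1/2 : ℝ))
    have hval : (1/2 : ℝ) * (1/((k:ℝ)+1)) - (1/2 : ℝ) * 0 = 1 / (2 * ((k:ℝ) + 1)) := by
      rw [mul_zero, sub_zero, one_div_mul_one_div]
    rw [hval] at hfinal
    exact Tendsto.congr heq hfinal
end

section
/- The 4×4 symmetric matrix M(A,B) = [[1, 0, B/2, B/3], [0, 1, −A/2, −A/3], [B/2, −A/2, (A²+B²)/3, (A²+B²)/4], [B/3, −A/3, (A²+B²)/4, (A²+B²)/5]] is positive definite whenever A² + B² > 0. -/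
theorem M_matrix_posDef (A B : ℝ) (h : 0 < A^2 + B^2) :
    (Matrix.of
      !![1, 0, B / 2, B / 3;
         0, 1, -A / 2, -A / 3;
         B / 2, -A / 2, (A^2 + B^2) / 3, (A^2 + B^2) / 4;
         B / 3, -A / 3, (A^2 + B^2) / 4, (A^2 + B^2) / 5] : Matrix (Fin 4) (Fin 4) ℝ).PosDef := by
  rw [Matrix.posDef_iff_dotProduct_mulVec]
  simp only [show ∀ M : Fin 4 → Fin 4 → ℝ, Matrix.of M = M from fun _ => rfl]
  constructor
  · ext i j
    fin_cases i <;> fin_cases j <;>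
      rfl
  · intro x hx
    simp only [dotProduct, Matrix.mulVec, Fin.sum_univ_four, Matrix.of_apply,
      Matrix.cons_val', Matrix.cons_val_zero, Matrix.cons_val_one, Matrix.head_cons,
      Matrix.empty_val', Matrix.cons_val_fin_one, Matrix.head_fin_const,
      Matrix.cons_val_two, Matrix.cons_val_three, Matrix.tail_cons, RCLike.star_def,
      star_trivial, Pi.star_apply]
    set x0 := x 0; set x1 := x 1; set x2 := x 2; set x3 := x 3
    have key : x0 * (1 * x0 + 0 * x1 + B / 2 * x2 + B / 3 * x3) +
        x1 * (0 * x0 + 1 * x1 + -A / 2 * x2 + -A / 3 * x3) +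
        x2 * (B / 2 * x0 + -A / 2 * x1 + (A ^ 2 + B ^ 2) / 3 * x2 + (A ^ 2 + B ^ 2) / 4 * x3) +
        x3 * (B / 3 * x0 + -A / 3 * x1 + (A ^ 2 + B ^ 2) / 4 * x2 + (A ^ 2 + B ^ 2) / 5 * x3)
        = (x0 + B * x2 / 2 + B * x3 / 3) ^ 2 + (x1 - A * x2 / 2 - A * x3 / 3) ^ 2 +
          (A ^ 2 + B ^ 2) * ((x2 + x3) ^ 2 / 12 + x3 ^ 2 / 180) := by ring
    rw [key]
    by_cases h3 : x3 = 0
    · by_cases h2 : x2 = 0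
      · have h01 : x0 ≠ 0 ∨ x1 ≠ 0 := by
          by_contra hc
          push_neg at hc
          exact hx (by funext i; fin_cases i <;>
            [exact hc.1; exact hc.2; exact h2; exact h3])
        rw [h2, h3]
        rcases h01 with h0 | h1
        · nlinarith [sq_pos_of_ne_zero h0, sq_nonneg x1]
        · nlinarith [sq_pos_of_ne_zero h1, sq_nonneg x0]
      · nlinarith [sq_nonneg (x0 + B * x2 / 2 + B * x3 / 3),
          sq_nonneg (x1 - A * x2 / 2 - A * x3 / 3),
          mul_pos h (sq_pos_of_ne_zero h2), mul_nonneg h.le (sq_nonneg x3),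
          mul_nonneg h.le (sq_nonneg (x2 + x3))]
    · nlinarith [sq_nonneg (x0 + B * x2 / 2 + B * x3 / 3),
        sq_nonneg (x1 - A * x2 / 2 - A * x3 / 3),
        mul_pos h (sq_pos_of_ne_zero h3), mul_nonneg h.le (sq_nonneg (x2 + x3))]
end
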